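/- Let G be a block graph and let P and Q be two shortest paths in G, both of length at least 1 and both having the vertex v as one endpoint. Let e be the edge of P incident to v and f the edge of Q incident to v. If e and f are not contained in a common maximal clique of G, then the union P ∪ Q is again a shortest path in G. -/

import Mathlib

open MvPolynomial SimpleGraph
open scoped Classical

/-- A graph is a block graph if every two distinct vertices joined by two
internally-vertex-disjoint paths are adjacent; equivalently, every
2-connected component of the graph is a complete subgraph. -/
def IsBlockGraph {V : Type*} (G : SimpleGraph V) : Prop :=
  ∀ u v : V, u ≠ v →
    (∃ p q : G.Walk u v, p.IsPath ∧ q.IsPath ∧ p ≠ q ∧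
      ∀ w, w ∈ p.support → w ∈ q.support → w = u ∨ w = v) →
    G.Adj u v

/-- A maximal clique: an inclusion-maximal set of pairwise adjacent vertices. -/
def IsMaxClique {V : Type*} (G : SimpleGraph V) (C : Finset V) : Prop :=
  G.IsClique (C : Set V) ∧ ∀ D : Finset V, G.IsClique (D : Set V) → C ⊆ D → C = D

/-- A shortest path between its endpoints: a path of minimal length. -/
def IsShortestPath {V : Type*} (G : SimpleGraph V) {u v : V} (p : G.Walk u v) : Prop :=
  p.IsPath ∧ p.length = G.dist u v

/-- Λ(p): the multiset of vertex colors and edge colors along a walk. -/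
def pathColors {V : Type*} {G : SimpleGraph V} (vcol : V → ℕ) (ecol : Sym2 V → ℕ)
    {u v : V} (p : G.Walk u v) : Multiset ℕ :=
  ↑(p.support.map vcol) + ↑(p.edges.map ecol)


lemma exists_maxClique_supset {V : Type*} [Fintype V] [DecidableEq V]
    (G : SimpleGraph V) (C₀ : Finset V) (h : G.IsClique (C₀ : Set V)) :
    ∃ C : Finset V, IsMaxClique G C ∧ C₀ ⊆ C := by
  classical
  obtain ⟨D, hD, hmax⟩ := Finset.exists_max_image
    ((Finset.univ : Finset V).powerset.filter fun D : Finset V => G.IsClique (D : Set V) ∧ C₀ ⊆ D)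
    Finset.card ⟨C₀, by simp [h]⟩
  simp only [Finset.mem_filter] at hD
  refine ⟨D, ⟨hD.2.1, fun E hE hDE => Finset.eq_of_subset_of_card_le hDE ?_⟩, hD.2.2⟩
  exact hmax E (by
    simp only [Finset.mem_filter]
    exact ⟨Finset.mem_powerset.mpr (Finset.subset_univ _), hE, hD.2.2.trans hDE⟩)

/-- Corollary 2.8: if two shortest paths of length ≥ 1 start at a
common endpoint v and their initial edges do not lie in a common maximal clique,
then their union is again a shortest path. -/
theorem union_of_shortest_paths {V : Type*} [Fintype V] [DecidableEq V]
    (G : SimpleGraph V) (hconn : G.Connected) (hblock : IsBlockGraph G)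
    {v x y a b : V} (h₁ : G.Adj v x) (h₂ : G.Adj v y)
    (p' : G.Walk x a) (q' : G.Walk y b)
    (hP : IsShortestPath G (SimpleGraph.Walk.cons h₁ p'))
    (hQ : IsShortestPath G (SimpleGraph.Walk.cons h₂ q'))
    (hcl : ¬ ∃ C : Finset V, IsMaxClique G C ∧ s(v, x) ∈ C.sym2 ∧ s(v, y) ∈ C.sym2) :
    IsShortestPath G ((SimpleGraph.Walk.cons h₁ p').reverse.append
      (SimpleGraph.Walk.cons h₂ q')) := by
 -- no vertex of a common max clique: derive x ≠ y and ¬ Adj x y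
  have hclq : ∀ C₀ : Finset V, G.IsClique (C₀ : Set V) → v ∈ C₀ → x ∈ C₀ → y ∈ C₀ → False := by
    intro C₀ hc hvm hxm hym
    obtain ⟨C, hC, hsub⟩ := exists_maxClique_supset G C₀ hc
    exact hcl ⟨C, hC, Finset.mk_mem_sym2_iff.mpr ⟨hsub hvm, hsub hxm⟩,
      Finset.mk_mem_sym2_iff.mpr ⟨hsub hvm, hsub hym⟩⟩
  have hne : x ≠ y := by
    intro h
    refine hclq {v, x} ?_ (by simp) (by simp) (by simp [h])
    have : ({v, x} : Finset V) = ({v, x} : Set V) := by simp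
    rw [this]
    exact SimpleGraph.isClique_pair.mpr fun _ => h₁
  have hnadj : ¬ G.Adj x y := by
    intro hadj
    refine hclq {v, x, y} ?_ (by simp) (by simp) (by simp)
    have : (({v, x, y} : Finset V) : Set V) = ({v, x, y} : Set V) := by simp
    rw [this]
    intro u hu w hw huw
    simp only [Set.mem_insert_iff, Set.mem_singleton_iff] at hu hw
    rcases hu with rfl | rfl | rfl <;> rcases hw with rfl | rfl | rfl <;>
      first
        | exact absurd rfl huw
        | assumption
        | exact h₁.symm
        | exact h₂.symm
        | exact hadj.symm
  -- no walk from x to y avoiding v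
  have havoid : ∀ w : G.Walk x y, v ∉ w.support → False := by
    intro w hvw
    have hπ : w.bypass.IsPath := SimpleGraph.Walk.bypass_isPath w
    have hvπ : v ∉ w.bypass.support := fun h => hvw (SimpleGraph.Walk.support_bypass_subset w h)
    have hσ : (SimpleGraph.Walk.cons h₁.symm (SimpleGraph.Walk.cons h₂ SimpleGraph.Walk.nil)).IsPath := by
      simp [SimpleGraph.Walk.cons_isPath_iff, h₁.ne, h₁.ne', h₂.ne, h₂.ne', hne]
    refine hnadj (hblock x y hne ⟨w.bypass, _, hπ, hσ, ?_, ?_⟩)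
    · intro h
      apply hvπ
      rw [h]
      simp
    · intro w' hw' hw''
      simp only [SimpleGraph.Walk.support_cons, SimpleGraph.Walk.support_nil,
        List.mem_cons, List.mem_singleton] at hw''
      rcases hw'' with rfl | rfl | rfl | h
      · exact Or.inl rfl
      · exact absurd hw' hvπ
      · exact Or.inr rfl
      · exact absurd h List.not_mem_nil
  have hvp' : v ∉ p'.support := ((SimpleGraph.Walk.cons_isPath_iff h₁ p').mp hP.1).2
  have hvq' : v ∉ q'.support := ((SimpleGraph.Walk.cons_isPath_iff h₂ q').mp hQ.1).2
  -- every walk from a to b passes through v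
  have hthrough : ∀ R : G.Walk a b, v ∈ R.support := by
    intro R
    by_contra hv
    refine havoid (p'.append (R.append q'.reverse)) ?_
    simp only [SimpleGraph.Walk.mem_support_append_iff, SimpleGraph.Walk.support_reverse,
      List.mem_reverse]
    push_neg
    exact ⟨hvp', hv, hvq'⟩
  -- distance additivity
  have hdist : G.dist a b = G.dist a v + G.dist v b := by
    refine le_antisymm (hconn.dist_triangle) ?_
    obtain ⟨R, hR⟩ := hconn.exists_walk_length_eq_dist a b
    have hv := hthrough R
    calc G.dist a v + G.dist v b
        ≤ (R.takeUntil v hv).length + (R.dropUntil v hv).length :=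
          Nat.add_le_add (SimpleGraph.dist_le _) (SimpleGraph.dist_le _)
      _ = R.length := by
          rw [← SimpleGraph.Walk.length_append, SimpleGraph.Walk.take_spec]
      _ = G.dist a b := hR
  have hlen : ((SimpleGraph.Walk.cons h₁ p').reverse.append
      (SimpleGraph.Walk.cons h₂ q')).length = G.dist a b := by
    rw [SimpleGraph.Walk.length_append, SimpleGraph.Walk.length_reverse, hP.2, hQ.2, hdist,
      SimpleGraph.dist_comm]
  exact ⟨SimpleGraph.Walk.isPath_of_length_eq_dist _ hlen, hlen⟩
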